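/- For any f ∈ H^s(𝕋²) with s > 1, there holds ‖f‖_{L^∞(𝕋²)} ≤ C·(1 + ‖f‖_{H^1(𝕋²)})·(log(e + ‖f‖_{H^s(𝕋²)}))^{1/2}, where C depends only on s. -/

import Mathlib

/-- The Fourier mode `e^{i n·x}` on the 2-torus, `n ∈ ℤ²`. -/
noncomputable def fourierMode2 (n : ℤ × ℤ) (x : ℝ × ℝ) : ℂ :=
  Complex.exp (Complex.I * ((n.1 : ℂ) * (x.1 : ℂ) + (n.2 : ℂ) * (x.2 : ℂ)))


namespace BrezisGallouetAux

open Finset Real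

/-- weight -/
abbrev ww (n : ℤ × ℤ) : ℝ := 1 + ((n.1 : ℝ) ^ 2 + (n.2 : ℝ) ^ 2)

/-- sup norm of a lattice point -/
abbrev mm (n : ℤ × ℤ) : ℕ := max n.1.natAbs n.2.natAbs

lemma one_le_ww (n : ℤ × ℤ) : 1 ≤ ww n := by
  have h1 := sq_nonneg ((n.1 : ℝ)); have h2 := sq_nonneg ((n.2 : ℝ))
  unfold ww; nlinarith

lemma ww_pos (n : ℤ × ℤ) : 0 < ww n := lt_of_lt_of_le one_pos (one_le_ww n)

lemma cast_natAbs_sq (a : ℤ) : ((a.natAbs : ℝ)) ^ 2 = (a : ℝ) ^ 2 := by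
  rw [Nat.cast_natAbs]; push_cast; rw [sq_abs]

lemma mm_cast (n : ℤ × ℤ) : (mm n : ℝ) = max (n.1.natAbs : ℝ) (n.2.natAbs : ℝ) := by
  unfold mm; exact_mod_cast Nat.cast_max ..

lemma lower_ww (n : ℤ × ℤ) : 1 + (mm n : ℝ) ^ 2 ≤ ww n := by
  have h1 := cast_natAbs_sq n.1
  have h2 := cast_natAbs_sq n.2
  rcases max_cases (n.1.natAbs : ℝ) (n.2.natAbs : ℝ) with ⟨h, _⟩ | ⟨h, _⟩ <;>
    rw [mm_cast, h] <;> unfold ww <;>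
    nlinarith [sq_nonneg ((n.1 : ℝ)), sq_nonneg ((n.2 : ℝ))]

lemma upper_ww (n : ℤ × ℤ) : ww n ≤ 1 + 2 * (mm n : ℝ) ^ 2 := by
  have h1 : ((n.1 : ℝ)) ^ 2 ≤ (mm n : ℝ) ^ 2 := by
    rw [← cast_natAbs_sq, mm_cast]
    exact pow_le_pow_left₀ (by positivity) (le_max_left _ _) 2
  have h2 : ((n.2 : ℝ)) ^ 2 ≤ (mm n : ℝ) ^ 2 := by
    rw [← cast_natAbs_sq, mm_cast]
    exact pow_le_pow_left₀ (by positivity) (le_max_right _ _) 2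
  unfold ww; nlinarith

noncomputable def box (k : ℕ) : Finset (ℤ × ℤ) := Finset.Icc (-(k : ℤ)) k ×ˢ Finset.Icc (-(k : ℤ)) k

lemma mem_box {n : ℤ × ℤ} {k : ℕ} : n ∈ box k ↔ mm n ≤ k := by
  simp only [box, Finset.mem_product, Finset.mem_Icc, mm, Nat.max_le]
  omega

lemma card_box (k : ℕ) : (box k).card = (2 * k + 1) ^ 2 := by
  rw [box, Finset.card_product, Int.card_Icc]
  have h : ((k : ℤ) + 1 - -(k : ℤ)).toNat = 2 * k + 1 := by omega
  rw [h]; ring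

lemma card_filter_mm (u : Finset (ℤ × ℤ)) (k : ℕ) (hk : 1 ≤ k) :
    (u.filter (fun n => mm n = k)).card ≤ 8 * k := by
  classical
  obtain ⟨j, rfl⟩ : ∃ j, k = j + 1 := ⟨k - 1, by omega⟩
  have hsub : u.filter (fun n => mm n = j + 1) ⊆ box (j + 1) \ box j := by
    intro n hn
    rw [Finset.mem_filter] at hn
    rw [Finset.mem_sdiff, mem_box, mem_box]
    omega
  have hbb : box j ⊆ box (j + 1) := by
    intro n hn; rw [mem_box] at *; omega
  calc (u.filter (fun n => mm n = j + 1)).card ≤ (box (j + 1) \ box j).card :=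
        Finset.card_le_card hsub
    _ = (box (j + 1)).card - (box j).card := Finset.card_sdiff_of_subset hbb
    _ ≤ 8 * (j + 1) := by
        rw [card_box, card_box]
        have : (2 * (j + 1) + 1) ^ 2 = (2 * j + 1) ^ 2 + 8 * (j + 1) := by ring
        omega

lemma shell_tsum (g : ℤ × ℤ → ℝ) (h : ℕ → ℝ) (C : ℝ)
    (hg0 : ∀ n, 0 ≤ g n) (hh0 : ∀ k, 0 ≤ h k) (hgh : ∀ n, g n ≤ h (mm n))
    (hC : ∀ N : ℕ, h 0 + ∑ k ∈ Finset.Icc 1 N, 8 * (k : ℝ) * h k ≤ C) :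
    Summable g ∧ ∑' n, g n ≤ C := by
  classical
  have key : ∀ u : Finset (ℤ × ℤ), ∑ n ∈ u, g n ≤ C := by
    intro u
    set N := u.sup mm with hN
    have maps : ∀ n ∈ u, mm n ∈ Finset.range (N + 1) := fun n hn =>
      Finset.mem_range.mpr (Nat.lt_succ_of_le (Finset.le_sup hn))
    have hrange : Finset.range (N + 1) = insert 0 (Finset.Icc 1 N) := by
      ext a; simp only [Finset.mem_range, Finset.mem_insert, Finset.mem_Icc]; omega
    calc ∑ n ∈ u, g n ≤ ∑ n ∈ u, h (mm n) := Finset.sum_le_sum (fun n _ => hgh n)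
      _ = ∑ k ∈ Finset.range (N + 1), ∑ n ∈ u.filter (fun n => mm n = k), h (mm n) :=
          (Finset.sum_fiberwise_of_maps_to maps _).symm
      _ ≤ ∑ k ∈ Finset.range (N + 1), (if k = 0 then h 0 else 8 * (k : ℝ) * h k) := by
          apply Finset.sum_le_sum
          intro k _
          have hcongr : ∑ n ∈ u.filter (fun n => mm n = k), h (mm n)
              = (u.filter (fun n => mm n = k)).card * h k := by
            rw [Finset.sum_congr rfl (fun n hn => by
              rw [(Finset.mem_filter.1 hn).2]), Finset.sum_const, nsmul_eq_mul]
          rw [hcongr]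
          by_cases hk : k = 0
          · subst hk
            rw [if_pos rfl]
            have hcard : (u.filter (fun n => mm n = 0)).card ≤ 1 := by
              apply Finset.card_le_one.mpr
              intro a ha b hb
              rw [Finset.mem_filter] at ha hb
              have ha2 := ha.2; have hb2 := hb.2
              unfold mm at ha2 hb2
              have : a.1 = 0 ∧ a.2 = 0 := by omega
              have hb' : b.1 = 0 ∧ b.2 = 0 := by omega
              ext <;> simp [this.1, this.2, hb'.1, hb'.2]
            calc ((u.filter (fun n => mm n = 0)).card : ℝ) * h 0 ≤ 1 * h 0 := by
                  apply mul_le_mul_of_nonneg_right _ (hh0 0)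
                  exact_mod_cast hcard
              _ = h 0 := one_mul _
          · rw [if_neg hk]
            have hcard := card_filter_mm u k (by omega)
            calc ((u.filter (fun n => mm n = k)).card : ℝ) * h k ≤ (8 * k : ℕ) * h k := by
                  apply mul_le_mul_of_nonneg_right _ (hh0 k)
                  exact_mod_cast hcard
              _ = 8 * (k : ℝ) * h k := by push_cast; ring
      _ = h 0 + ∑ k ∈ Finset.Icc 1 N, (if k = 0 then h 0 else 8 * (k : ℝ) * h k) := by
          rw [hrange, Finset.sum_insert (by simp), if_pos rfl]
      _ ≤ C := by
          rw [Finset.sum_congr rfl (fun k hk => by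
            rw [if_neg (by rw [Finset.mem_Icc] at hk; omega)])]
          exact hC N
  exact ⟨summable_of_sum_le hg0 key,
    Summable.tsum_le_of_sum_le (summable_of_sum_le hg0 key) key⟩

/-- Cauchy–Schwarz for tsums of square roots. -/
lemma cs (F G : ℤ × ℤ → ℝ) (hF0 : ∀ i, 0 ≤ F i) (hG0 : ∀ i, 0 ≤ G i)
    (hF : Summable F) (hG : Summable G) :
    Summable (fun i => Real.sqrt (F i) * Real.sqrt (G i)) ∧
      ∑' i, Real.sqrt (F i) * Real.sqrt (G i)
        ≤ Real.sqrt (∑' i, F i) * Real.sqrt (∑' i, G i) := by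
  have hs : Summable (fun i => Real.sqrt (F i) * Real.sqrt (G i)) := by
    apply Summable.of_nonneg_of_le
      (fun i => mul_nonneg (Real.sqrt_nonneg _) (Real.sqrt_nonneg _))
      (fun i => ?_) ((hF.add hG).div_const 2)
    have h1 : Real.sqrt (F i) ^ 2 = F i := Real.sq_sqrt (hF0 i)
    have h2 : Real.sqrt (G i) ^ 2 = G i := Real.sq_sqrt (hG0 i)
    nlinarith [sq_nonneg (Real.sqrt (F i) - Real.sqrt (G i))]
  refine ⟨hs, Summable.tsum_le_of_sum_le hs (fun u => ?_)⟩
  have h1 : (∑ i ∈ u, Real.sqrt (F i) * Real.sqrt (G i)) ^ 2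
      ≤ (∑ i ∈ u, F i) * (∑ i ∈ u, G i) := by
    have h := Finset.sum_mul_sq_le_sq_mul_sq u
      (fun i => Real.sqrt (F i)) (fun i => Real.sqrt (G i))
    have e1 : ∑ i ∈ u, Real.sqrt (F i) ^ 2 = ∑ i ∈ u, F i :=
      Finset.sum_congr rfl (fun i _ => Real.sq_sqrt (hF0 i))
    have e2 : ∑ i ∈ u, Real.sqrt (G i) ^ 2 = ∑ i ∈ u, G i :=
      Finset.sum_congr rfl (fun i _ => Real.sq_sqrt (hG0 i))
    rwa [e1, e2] at h
  have h2 : ∑ i ∈ u, F i ≤ ∑' i, F i := Summable.sum_le_tsum u (fun i _ => hF0 i) hF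
  have h3 : ∑ i ∈ u, G i ≤ ∑' i, G i := Summable.sum_le_tsum u (fun i _ => hG0 i) hG
  have h0 : 0 ≤ ∑ i ∈ u, Real.sqrt (F i) * Real.sqrt (G i) :=
    Finset.sum_nonneg (fun i _ => mul_nonneg (Real.sqrt_nonneg _) (Real.sqrt_nonneg _))
  have hF'0 : 0 ≤ ∑ i ∈ u, F i := Finset.sum_nonneg (fun i _ => hF0 i)
  have hG'0 : (0:ℝ) ≤ ∑' i, G i := tsum_nonneg hG0
  calc ∑ i ∈ u, Real.sqrt (F i) * Real.sqrt (G i)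
      = Real.sqrt ((∑ i ∈ u, Real.sqrt (F i) * Real.sqrt (G i)) ^ 2) :=
        (Real.sqrt_sq h0).symm
    _ ≤ Real.sqrt ((∑' i, F i) * (∑' i, G i)) := by
        apply Real.sqrt_le_sqrt
        calc (∑ i ∈ u, Real.sqrt (F i) * Real.sqrt (G i)) ^ 2
            ≤ (∑ i ∈ u, F i) * (∑ i ∈ u, G i) := h1
          _ ≤ (∑' i, F i) * (∑' i, G i) := by
              apply mul_le_mul h2 h3 (Finset.sum_nonneg (fun i _ => hG0 i))
                (tsum_nonneg hF0)
    _ = Real.sqrt (∑' i, F i) * Real.sqrt (∑' i, G i) :=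
        Real.sqrt_mul (tsum_nonneg hF0) _

/-- MVT step for the tail estimate. -/
lemma step_ineq (p : ℝ) (hp : 1 < p) (x : ℝ) (hx : 2 ≤ x) :
    (p - 1) * x ^ (-p) ≤ (x - 1) ^ (1 - p) - x ^ (1 - p) := by
  have hx1 : (1 : ℝ) ≤ x - 1 := by linarith
  have hlt : x - 1 < x := by linarith
  have hcont : ContinuousOn (fun y : ℝ => y ^ (1 - p)) (Set.Icc (x - 1) x) := by
    intro y hy
    have hy0 : y ≠ 0 := by have := hy.1; intro h; rw [h] at this; linarith
    exact (Real.continuousAt_rpow_const y (1 - p) (Or.inl hy0)).continuousWithinAt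
  have hderiv : ∀ y ∈ Set.Ioo (x - 1) x,
      HasDerivAt (fun y : ℝ => y ^ (1 - p)) ((1 - p) * y ^ ((1 - p) - 1)) y := by
    intro y hy
    have hy0 : y ≠ 0 := by have := hy.1; intro h; rw [h] at this; linarith
    exact Real.hasDerivAt_rpow_const (Or.inl hy0)
  obtain ⟨c, hc, heq⟩ := exists_hasDerivAt_eq_slope (fun y : ℝ => y ^ (1 - p))
    (fun y => (1 - p) * y ^ ((1 - p) - 1)) hlt hcont hderiv
  have hc0 : 0 < c := by have := hc.1; linarith
  have hcx : c ≤ x := le_of_lt hc.2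
  have hrw : x - (x - 1) = 1 := by ring
  rw [hrw, div_one] at heq
  have hexp : (1 - p) - 1 = -p := by ring
  rw [hexp] at heq
  have hmono : x ^ (-p) ≤ c ^ (-p) :=
    Real.rpow_le_rpow_of_nonpos hc0 hcx (by linarith)
  nlinarith [heq, mul_le_mul_of_nonneg_left hmono (by linarith : (0:ℝ) ≤ p - 1)]

lemma telescope (p : ℝ) (a M : ℕ) :
    ∑ k ∈ Finset.Icc (a + 1) (a + M), (((k : ℝ) - 1) ^ (1 - p) - (k : ℝ) ^ (1 - p))
      = (a : ℝ) ^ (1 - p) - ((a + M : ℕ) : ℝ) ^ (1 - p) := by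
  induction M with
  | zero => simp
  | succ M ih =>
      have h : a + (M + 1) = (a + M) + 1 := by omega
      rw [h, Finset.sum_Icc_succ_top (by omega)]
      rw [ih]
      push_cast
      ring_nf

lemma sum_rpow_tail (p : ℝ) (hp : 1 < p) (a N : ℕ) (ha : 1 ≤ a) :
    ∑ k ∈ Finset.Icc a N, ((k : ℝ)) ^ (-p) ≤ (1 + 1 / (p - 1)) * (a : ℝ) ^ (1 - p) := by
  have hp1 : (0:ℝ) < p - 1 := by linarith
  have ha0 : (0:ℝ) < a := by exact_mod_cast ha
  have hrpos : (0:ℝ) ≤ (1 + 1 / (p - 1)) * (a : ℝ) ^ (1 - p) := by positivity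
  by_cases hNa : N < a
  · rw [Finset.Icc_eq_empty (by omega)]; simpa using hrpos
  push_neg at hNa
  obtain ⟨M, rfl⟩ : ∃ M, N = a + M := ⟨N - a, by omega⟩
  have hsplit : Finset.Icc a (a + M) = insert a (Finset.Icc (a + 1) (a + M)) := by
    ext k; simp only [Finset.mem_Icc, Finset.mem_insert]; omega
  rw [hsplit, Finset.sum_insert (by simp)]
  have h1 : (a : ℝ) ^ (-p) ≤ (a : ℝ) ^ (1 - p) :=
    Real.rpow_le_rpow_of_exponent_le (by exact_mod_cast ha) (by linarith)
  have h2 : ∑ k ∈ Finset.Icc (a + 1) (a + M), ((k : ℝ)) ^ (-p)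
      ≤ (1 / (p - 1)) * (a : ℝ) ^ (1 - p) := by
    have hterm : ∀ k ∈ Finset.Icc (a + 1) (a + M),
        ((k : ℝ)) ^ (-p) ≤ (1 / (p - 1)) * ((((k : ℝ) - 1) ^ (1 - p) - (k : ℝ) ^ (1 - p))) := by
      intro k hk
      rw [Finset.mem_Icc] at hk
      have hk2 : (2 : ℝ) ≤ (k : ℝ) := by
        have : 2 ≤ k := by omega
        exact_mod_cast this
      have hst := step_ineq p hp (k : ℝ) hk2
      rw [div_mul_eq_mul_div, le_div_iff₀ hp1]
      linarith
    calc ∑ k ∈ Finset.Icc (a + 1) (a + M), ((k : ℝ)) ^ (-p)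
        ≤ ∑ k ∈ Finset.Icc (a + 1) (a + M),
            (1 / (p - 1)) * ((((k : ℝ) - 1) ^ (1 - p) - (k : ℝ) ^ (1 - p))) :=
          Finset.sum_le_sum hterm
      _ = (1 / (p - 1)) * ((a : ℝ) ^ (1 - p) - ((a + M : ℕ) : ℝ) ^ (1 - p)) := by
          rw [← Finset.mul_sum, telescope]
      _ ≤ (1 / (p - 1)) * (a : ℝ) ^ (1 - p) := by
          apply mul_le_mul_of_nonneg_left _ (by positivity)
          have : (0:ℝ) ≤ ((a + M : ℕ) : ℝ) ^ (1 - p) := Real.rpow_nonneg (by positivity) _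
          linarith
  linarith

/-- The per-shell term bound. -/
lemma kterm (s : ℝ) (hs : 1 < s) (k : ℕ) (hk : 1 ≤ k) :
    8 * (k : ℝ) * (1 + (k : ℝ) ^ 2) ^ (-s) ≤ 8 * (k : ℝ) ^ (-(2 * s - 1)) := by
  have hk0 : (0:ℝ) < k := by exact_mod_cast hk
  have h1 : (1 + (k : ℝ) ^ 2) ^ (-s) ≤ ((k : ℝ) ^ 2) ^ (-s) :=
    Real.rpow_le_rpow_of_nonpos (by positivity) (by nlinarith) (by linarith)
  have h2 : (((k : ℝ)) ^ 2) ^ (-s) = (k : ℝ) ^ (-(2 * s)) := by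
    rw [← Real.rpow_natCast (k : ℝ) 2, ← Real.rpow_mul hk0.le]
    norm_num
  have h3 : (k : ℝ) * (k : ℝ) ^ (-(2 * s)) = (k : ℝ) ^ (-(2 * s - 1)) := by
    have := Real.rpow_add hk0 1 (-(2 * s))
    rw [Real.rpow_one] at this
    rw [← this]
    congr 1; ring
  calc 8 * (k : ℝ) * (1 + (k : ℝ) ^ 2) ^ (-s) ≤ 8 * (k : ℝ) * ((k : ℝ) ^ 2) ^ (-s) := by
        apply mul_le_mul_of_nonneg_left h1 (by positivity)
    _ = 8 * ((k : ℝ) * (k : ℝ) ^ (-(2 * s))) := by rw [h2]; ring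
    _ = 8 * (k : ℝ) ^ (-(2 * s - 1)) := by rw [h3]

end BrezisGallouetAux

open BrezisGallouetAux in
set_option maxHeartbeats 1000000 in
/-- Brezis–Gallouet logarithmic Sobolev inequality on the 2-torus: for `s > 1`
there is `C = C(s)` with
`‖f‖_{L^∞} ≤ C (1 + ‖f‖_{H¹}) (log(e + ‖f‖_{H^s}))^{1/2}` for all `f ∈ H^s(𝕋²)`. -/
theorem brezis_gallouet (s : ℝ) (hs : 1 < s) :
    ∃ C > (0 : ℝ), ∀ c : ℤ × ℤ → ℂ,
      Summable (fun n : ℤ × ℤ =>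
        (1 + ((n.1 : ℝ) ^ 2 + (n.2 : ℝ) ^ 2)) ^ s * ‖c n‖ ^ 2) →
      ∀ x : ℝ × ℝ,
        ‖∑' n : ℤ × ℤ, c n * fourierMode2 n x‖ ≤
          C * (1 + (∑' n : ℤ × ℤ,
                (1 + ((n.1 : ℝ) ^ 2 + (n.2 : ℝ) ^ 2)) * ‖c n‖ ^ 2) ^ ((1 : ℝ) / 2))
            * Real.sqrt (Real.log (Real.exp 1 +
                (∑' n : ℤ × ℤ,
                  (1 + ((n.1 : ℝ) ^ 2 + (n.2 : ℝ) ^ 2)) ^ s * ‖c n‖ ^ 2) ^ ((1 : ℝ) / 2))) := by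
  classical
  have hs1 : (0:ℝ) < s - 1 := by linarith
  have hs2 : (0:ℝ) < 2 * s - 2 := by linarith
  set Ks : ℝ := 8 * (1 + 1 / (2 * s - 2)) * (3:ℝ) ^ (s - 1) with hKs
  have hKs0 : 0 < Ks := by positivity
  set D1 : ℝ := Real.sqrt (9 + 8 / (s - 1)) with hD1
  set D2 : ℝ := Real.sqrt Ks with hD2
  have hD1pos : 0 < D1 := Real.sqrt_pos.mpr (by positivity)
  have hD2pos : 0 < D2 := Real.sqrt_pos.mpr hKs0
  refine ⟨D1 + D2, by linarith, ?_⟩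
  intro c hsum x
  show ‖∑' n : ℤ × ℤ, c n * fourierMode2 n x‖ ≤
      (D1 + D2) * (1 + (∑' n : ℤ × ℤ, ww n * ‖c n‖ ^ 2) ^ ((1 : ℝ) / 2)) *
      Real.sqrt (Real.log (Real.exp 1 +
        (∑' n : ℤ × ℤ, ww n ^ s * ‖c n‖ ^ 2) ^ ((1 : ℝ) / 2)))
  have hsumS : Summable (fun n : ℤ × ℤ => ww n ^ s * ‖c n‖ ^ 2) := hsum
  have hG0 : ∀ n : ℤ × ℤ, (0:ℝ) ≤ ww n ^ s * ‖c n‖ ^ 2 := fun n => by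
    have := ww_pos n; positivity
  have hG10 : ∀ n : ℤ × ℤ, (0:ℝ) ≤ ww n * ‖c n‖ ^ 2 := fun n =>
    mul_nonneg (ww_pos n).le (sq_nonneg _)
  have hsum1 : Summable (fun n : ℤ × ℤ => ww n * ‖c n‖ ^ 2) := by
    apply Summable.of_nonneg_of_le hG10 (fun n => ?_) hsumS
    have h := Real.rpow_le_rpow_of_exponent_le (one_le_ww n) hs.le
    rw [Real.rpow_one] at h
    exact mul_le_mul_of_nonneg_right h (sq_nonneg _)
  set A := ∑' n : ℤ × ℤ, ww n * ‖c n‖ ^ 2 with hAdef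
  set Bs := ∑' n : ℤ × ℤ, ww n ^ s * ‖c n‖ ^ 2 with hBdef
  have hA0 : 0 ≤ A := by rw [hAdef]; exact tsum_nonneg hG10
  have hBs0 : 0 ≤ Bs := by rw [hBdef]; exact tsum_nonneg hG0
  set E := Real.exp 1 + Real.sqrt Bs with hEdef
  have hEe : Real.exp 1 ≤ E := le_add_of_nonneg_right (Real.sqrt_nonneg _)
  have hEpos : 0 < E := lt_of_lt_of_le (Real.exp_pos 1) hEe
  have hE1 : 1 ≤ E := by nlinarith [Real.add_one_le_exp 1]
  set L := Real.log E with hLdef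
  have hL1 : 1 ≤ L := by
    have h := Real.log_le_log (Real.exp_pos 1) hEe
    rwa [Real.log_exp] at h
  set lam := E ^ (1 / (s - 1) : ℝ) with hlamdef
  have hlam1 : 1 ≤ lam := by
    have h := Real.rpow_le_rpow_of_exponent_le hE1
      (le_of_lt (div_pos one_pos hs1) : (0:ℝ) ≤ 1 / (s - 1))
    rwa [Real.rpow_zero] at h
  have hlampos : 0 < lam := lt_of_lt_of_le one_pos hlam1
  have hloglam : Real.log lam = (1 / (s - 1)) * L := Real.log_rpow hEpos _
  have hloglam0 : 0 ≤ Real.log lam := by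
    rw [hloglam]
    exact mul_nonneg (le_of_lt (div_pos one_pos hs1)) (by linarith)
  clear_value A Bs E L lam
  -- Shell estimate 1: global summability weight
  have hC1 : ∀ N : ℕ, (1 + ((0:ℕ):ℝ) ^ 2) ^ (-s)
      + ∑ k ∈ Finset.Icc 1 N, 8 * (k:ℝ) * (1 + (k:ℝ) ^ 2) ^ (-s)
      ≤ 1 + 8 * (1 + 1 / (2 * s - 2)) := by
    intro N
    have h0 : ((1:ℝ) + ((0:ℕ):ℝ) ^ 2) ^ (-s) = 1 := by norm_num
    have htail := sum_rpow_tail (2 * s - 1) (by linarith) 1 N le_rfl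
    rw [Nat.cast_one, Real.one_rpow, mul_one] at htail
    have hterm : ∀ k ∈ Finset.Icc 1 N,
        8 * (k:ℝ) * (1 + (k:ℝ) ^ 2) ^ (-s) ≤ 8 * (k:ℝ) ^ (-(2 * s - 1)) := by
      intro k hk
      rw [Finset.mem_Icc] at hk
      exact kterm s hs k hk.1
    calc (1 + ((0:ℕ):ℝ) ^ 2) ^ (-s) + ∑ k ∈ Finset.Icc 1 N, 8 * (k:ℝ) * (1 + (k:ℝ) ^ 2) ^ (-s)
        ≤ 1 + ∑ k ∈ Finset.Icc 1 N, 8 * (k:ℝ) ^ (-(2 * s - 1)) := by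
          rw [h0]; exact add_le_add_right (Finset.sum_le_sum hterm) 1
      _ = 1 + 8 * ∑ k ∈ Finset.Icc 1 N, (k:ℝ) ^ (-(2 * s - 1)) := by
          rw [Finset.mul_sum]
      _ ≤ 1 + 8 * (1 + 1 / (2 * s - 1 - 1)) := by
          have := mul_le_mul_of_nonneg_left htail (by norm_num : (0:ℝ) ≤ 8)
          linarith
      _ = 1 + 8 * (1 + 1 / (2 * s - 2)) := by ring_nf
  have hshell1 := shell_tsum (fun n => ww n ^ (-s)) (fun k => (1 + (k:ℝ) ^ 2) ^ (-s))
      (1 + 8 * (1 + 1 / (2 * s - 2)))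
      (fun n => Real.rpow_nonneg (ww_pos n).le _)
      (fun k => Real.rpow_nonneg (by positivity) _)
      (fun n => Real.rpow_le_rpow_of_nonpos (by positivity) (lower_ww n) (by linarith))
      hC1
  obtain ⟨hsumF1, -⟩ := hshell1
  -- Summability of the coefficients
  have hcs1 := cs (fun n => ww n ^ (-s)) (fun n => ww n ^ s * ‖c n‖ ^ 2)
    (fun n => Real.rpow_nonneg (ww_pos n).le _) hG0 hsumF1 hsumS
  have hid1 : ∀ n : ℤ × ℤ,
      Real.sqrt (ww n ^ (-s)) * Real.sqrt (ww n ^ s * ‖c n‖ ^ 2) = ‖c n‖ := by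
    intro n
    rw [← Real.sqrt_mul (Real.rpow_nonneg (ww_pos n).le _), ← mul_assoc,
      ← Real.rpow_add (ww_pos n), neg_add_cancel, Real.rpow_zero, one_mul,
      Real.sqrt_sq (norm_nonneg _)]
  have hsumnorm : Summable (fun n : ℤ × ℤ => ‖c n‖) := hcs1.1.congr hid1
  -- Shell estimate: low frequencies
  have hghlo : ∀ n : ℤ × ℤ, (if ww n ≤ lam ^ 2 then (ww n)⁻¹ else 0)
      ≤ (if 1 + ((mm n):ℝ) ^ 2 ≤ lam ^ 2 then (1 + ((mm n):ℝ) ^ 2)⁻¹ else 0) := by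
    intro n
    by_cases hn : ww n ≤ lam ^ 2
    · rw [if_pos hn, if_pos (le_trans (lower_ww n) hn)]
      exact inv_anti₀ (by positivity) (lower_ww n)
    · rw [if_neg hn]
      split_ifs with h
      exacts [inv_nonneg.mpr (by positivity), le_rfl]
  have hClo : ∀ N : ℕ, (if 1 + ((0:ℕ):ℝ) ^ 2 ≤ lam ^ 2 then (1 + ((0:ℕ):ℝ) ^ 2)⁻¹ else 0)
      + ∑ k ∈ Finset.Icc 1 N,
          8 * (k:ℝ) * (if 1 + (k:ℝ) ^ 2 ≤ lam ^ 2 then (1 + (k:ℝ) ^ 2)⁻¹ else 0)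
      ≤ 9 + 8 * Real.log lam := by
    intro N
    set K := Nat.floor lam with hKfl
    have h0 : (if 1 + ((0:ℕ):ℝ) ^ 2 ≤ lam ^ 2 then (1 + ((0:ℕ):ℝ) ^ 2)⁻¹ else 0) ≤ 1 := by
      split_ifs <;> norm_num
    have hterm : ∀ k ∈ Finset.Icc 1 N,
        8 * (k:ℝ) * (if 1 + (k:ℝ) ^ 2 ≤ lam ^ 2 then (1 + (k:ℝ) ^ 2)⁻¹ else 0)
          ≤ (if k ∈ Finset.Icc 1 K then 8 * (k:ℝ)⁻¹ else 0) := by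
      intro k hk
      rw [Finset.mem_Icc] at hk
      have hk1 : (1:ℝ) ≤ (k:ℝ) := by exact_mod_cast hk.1
      have hk0 : (0:ℝ) < (k:ℝ) := by linarith
      split_ifs with hcond hmem hmem
      · -- both true
        have e1 : (1 + (k:ℝ) ^ 2)⁻¹ ≤ ((k:ℝ) ^ 2)⁻¹ :=
          inv_anti₀ (by positivity) (by nlinarith)
        have hkne : (k:ℝ) ≠ 0 := ne_of_gt hk0
        have e2 : 8 * (k:ℝ) * ((k:ℝ) ^ 2)⁻¹ = 8 * (k:ℝ)⁻¹ := by
          field_simp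
        calc 8 * (k:ℝ) * (1 + (k:ℝ) ^ 2)⁻¹ ≤ 8 * (k:ℝ) * ((k:ℝ) ^ 2)⁻¹ :=
              mul_le_mul_of_nonneg_left e1 (by positivity)
          _ = 8 * (k:ℝ)⁻¹ := e2
      · -- cond true, mem false: contradiction
        exfalso
        apply hmem
        rw [Finset.mem_Icc]
        refine ⟨hk.1, Nat.le_floor ?_⟩
        rw [← Real.sqrt_sq hk0.le, ← Real.sqrt_sq (by linarith : (0:ℝ) ≤ lam)]
        exact Real.sqrt_le_sqrt (by nlinarith)
      · rw [mul_zero]; positivity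
      · rw [mul_zero]
    have hharm : ((harmonic K : ℚ) : ℝ) = ∑ k ∈ Finset.Icc 1 K, ((k:ℝ))⁻¹ := by
      rw [harmonic_eq_sum_Icc]; push_cast; rfl
    have hlogK : Real.log K ≤ Real.log lam := by
      by_cases hK0 : K = 0
      · rw [hK0]; simpa using hloglam0
      · exact Real.log_le_log (by exact_mod_cast Nat.pos_of_ne_zero hK0)
          (Nat.floor_le (by linarith))
    calc (if 1 + ((0:ℕ):ℝ) ^ 2 ≤ lam ^ 2 then (1 + ((0:ℕ):ℝ) ^ 2)⁻¹ else 0)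
          + ∑ k ∈ Finset.Icc 1 N,
            8 * (k:ℝ) * (if 1 + (k:ℝ) ^ 2 ≤ lam ^ 2 then (1 + (k:ℝ) ^ 2)⁻¹ else 0)
        ≤ 1 + ∑ k ∈ Finset.Icc 1 N, (if k ∈ Finset.Icc 1 K then 8 * (k:ℝ)⁻¹ else 0) :=
          add_le_add h0 (Finset.sum_le_sum hterm)
      _ = 1 + ∑ k ∈ (Finset.Icc 1 N).filter (fun k => k ∈ Finset.Icc 1 K), 8 * (k:ℝ)⁻¹ := by
          rw [Finset.sum_filter]
      _ ≤ 1 + ∑ k ∈ Finset.Icc 1 K, 8 * (k:ℝ)⁻¹ := by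
          apply add_le_add_right
          apply Finset.sum_le_sum_of_subset_of_nonneg
          · intro k hk; exact (Finset.mem_filter.1 hk).2
          · intro k _ _; positivity
      _ = 1 + 8 * ((harmonic K : ℚ) : ℝ) := by rw [hharm, Finset.mul_sum]
      _ ≤ 1 + 8 * (1 + Real.log K) := by
          have := harmonic_le_one_add_log K
          linarith
      _ ≤ 9 + 8 * Real.log lam := by linarith
  have hshelllo := shell_tsum (fun n => if ww n ≤ lam ^ 2 then (ww n)⁻¹ else 0)
      (fun k => if 1 + (k:ℝ) ^ 2 ≤ lam ^ 2 then (1 + (k:ℝ) ^ 2)⁻¹ else 0)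
      (9 + 8 * Real.log lam)
      (fun n => by split_ifs with h; exacts [inv_nonneg.mpr (ww_pos n).le, le_rfl])
      (fun k => by split_ifs with h; exacts [inv_nonneg.mpr (by positivity), le_rfl])
      hghlo hClo
  -- Shell estimate: high frequencies
  set a : ℕ := Nat.floor (lam / Real.sqrt 3) + 1 with hadef
  have hsqrt3 : (0:ℝ) < Real.sqrt 3 := Real.sqrt_pos.mpr (by norm_num)
  have htdiv0 : (0:ℝ) < lam / Real.sqrt 3 := div_pos hlampos hsqrt3
  have hagt : lam / Real.sqrt 3 < (a:ℝ) := by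
    rw [hadef]; push_cast
    exact Nat.lt_floor_add_one _
  have ha1 : 1 ≤ a := by omega
  have hghhi : ∀ n : ℤ × ℤ, (if ww n ≤ lam ^ 2 then 0 else ww n ^ (-s))
      ≤ (if lam ^ 2 < 1 + 2 * ((mm n):ℝ) ^ 2 then (1 + ((mm n):ℝ) ^ 2) ^ (-s) else 0) := by
    intro n
    by_cases hn : ww n ≤ lam ^ 2
    · rw [if_pos hn]
      split_ifs with h
      exacts [Real.rpow_nonneg (by positivity) _, le_rfl]
    · push_neg at hn
      rw [if_neg (not_le.mpr hn), if_pos (by nlinarith [upper_ww n])]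
      exact Real.rpow_le_rpow_of_nonpos (by positivity) (lower_ww n) (by linarith)
  have hChi : ∀ N : ℕ,
      (if lam ^ 2 < 1 + 2 * ((0:ℕ):ℝ) ^ 2 then (1 + ((0:ℕ):ℝ) ^ 2) ^ (-s) else 0)
      + ∑ k ∈ Finset.Icc 1 N,
          8 * (k:ℝ) * (if lam ^ 2 < 1 + 2 * (k:ℝ) ^ 2 then (1 + (k:ℝ) ^ 2) ^ (-s) else 0)
      ≤ Ks * lam ^ (2 - 2 * s) := by
    intro N
    have h00 : (if lam ^ 2 < 1 + 2 * ((0:ℕ):ℝ) ^ 2 then (1 + ((0:ℕ):ℝ) ^ 2) ^ (-s) else 0)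
        = 0 := by
      rw [if_neg]
      push_cast
      nlinarith
    have hterm : ∀ k ∈ Finset.Icc 1 N,
        8 * (k:ℝ) * (if lam ^ 2 < 1 + 2 * (k:ℝ) ^ 2 then (1 + (k:ℝ) ^ 2) ^ (-s) else 0)
          ≤ (if a ≤ k then 8 * (k:ℝ) ^ (-(2 * s - 1)) else 0) := by
      intro k hk
      rw [Finset.mem_Icc] at hk
      have hk1 : (1:ℝ) ≤ (k:ℝ) := by exact_mod_cast hk.1
      split_ifs with hcond hak hak
      · exact kterm s hs k hk.1
      · exfalso
        apply hak
        have h3 : lam ^ 2 < 3 * (k:ℝ) ^ 2 := by nlinarith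
        have hlk : lam < Real.sqrt 3 * (k:ℝ) := by
          have h4 : lam < Real.sqrt (3 * (k:ℝ) ^ 2) := by
            rw [← Real.sqrt_sq (by linarith : (0:ℝ) ≤ lam)]
            exact Real.sqrt_lt_sqrt (sq_nonneg _) h3
          rwa [Real.sqrt_mul (by norm_num : (0:ℝ) ≤ 3),
            Real.sqrt_sq (by linarith : (0:ℝ) ≤ (k:ℝ))] at h4
        have hfl : lam / Real.sqrt 3 < (k:ℝ) := by
          rw [div_lt_iff₀ hsqrt3]; linarith
        have := (Nat.floor_lt htdiv0.le).mpr hfl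
        omega
      · rw [mul_zero]; positivity
      · rw [mul_zero]
    have htail := sum_rpow_tail (2 * s - 1) (by linarith) a N ha1
    have he1 : (1:ℝ) - (2 * s - 1) = 2 - 2 * s := by ring
    have he2 : 2 * s - 1 - 1 = 2 * s - 2 := by ring
    rw [he1, he2] at htail
    have hstep : (a:ℝ) ^ (2 - 2 * s) ≤ (lam / Real.sqrt 3) ^ (2 - 2 * s) :=
      Real.rpow_le_rpow_of_nonpos htdiv0 hagt.le (by linarith)
    have hconv : (lam / Real.sqrt 3) ^ (2 - 2 * s) = (3:ℝ) ^ (s - 1) * lam ^ (2 - 2 * s) := by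
      rw [Real.div_rpow hlampos.le (Real.sqrt_nonneg 3), Real.sqrt_eq_rpow,
        ← Real.rpow_mul (by norm_num : (0:ℝ) ≤ 3),
        show (1 / 2 : ℝ) * (2 - 2 * s) = 1 - s by ring, div_eq_mul_inv,
        ← Real.rpow_neg (by norm_num : (0:ℝ) ≤ 3), show -(1 - s) = s - 1 by ring, mul_comm]
    calc (if lam ^ 2 < 1 + 2 * ((0:ℕ):ℝ) ^ 2 then (1 + ((0:ℕ):ℝ) ^ 2) ^ (-s) else 0)
          + ∑ k ∈ Finset.Icc 1 N,
            8 * (k:ℝ) * (if lam ^ 2 < 1 + 2 * (k:ℝ) ^ 2 then (1 + (k:ℝ) ^ 2) ^ (-s) else 0)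
        ≤ 0 + ∑ k ∈ Finset.Icc 1 N, (if a ≤ k then 8 * (k:ℝ) ^ (-(2 * s - 1)) else 0) :=
          add_le_add (le_of_eq h00) (Finset.sum_le_sum hterm)
      _ = ∑ k ∈ (Finset.Icc 1 N).filter (fun k => a ≤ k), 8 * (k:ℝ) ^ (-(2 * s - 1)) := by
          rw [zero_add, Finset.sum_filter]
      _ ≤ ∑ k ∈ Finset.Icc a N, 8 * (k:ℝ) ^ (-(2 * s - 1)) := by
          apply Finset.sum_le_sum_of_subset_of_nonneg
          · intro k hk
            rw [Finset.mem_filter, Finset.mem_Icc] at hk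
            rw [Finset.mem_Icc]
            exact ⟨hk.2, hk.1.2⟩
          · intro k _ _
            have : (0:ℝ) ≤ (k:ℝ) ^ (-(2 * s - 1)) := Real.rpow_nonneg (by positivity) _
            linarith
      _ = 8 * ∑ k ∈ Finset.Icc a N, (k:ℝ) ^ (-(2 * s - 1)) := by rw [Finset.mul_sum]
      _ ≤ 8 * ((1 + 1 / (2 * s - 2)) * (a:ℝ) ^ (2 - 2 * s)) :=
          mul_le_mul_of_nonneg_left htail (by norm_num)
      _ ≤ 8 * ((1 + 1 / (2 * s - 2)) * ((lam / Real.sqrt 3) ^ (2 - 2 * s))) := by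
          have hc : (0:ℝ) ≤ 1 + 1 / (2 * s - 2) := by positivity
          have := mul_le_mul_of_nonneg_left hstep hc
          linarith
      _ = Ks * lam ^ (2 - 2 * s) := by rw [hconv, hKs]; ring
  have hshellhi := shell_tsum (fun n => if ww n ≤ lam ^ 2 then 0 else ww n ^ (-s))
      (fun k => if lam ^ 2 < 1 + 2 * (k:ℝ) ^ 2 then (1 + (k:ℝ) ^ 2) ^ (-s) else 0)
      (Ks * lam ^ (2 - 2 * s))
      (fun n => by split_ifs with h; exacts [le_rfl, Real.rpow_nonneg (ww_pos n).le _])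
      (fun k => by split_ifs with h; exacts [Real.rpow_nonneg (by positivity) _, le_rfl])
      hghhi hChi
  -- Cauchy-Schwarz: low part
  have hcslo := cs (fun n => if ww n ≤ lam ^ 2 then (ww n)⁻¹ else 0)
    (fun n => ww n * ‖c n‖ ^ 2)
    (fun n => by split_ifs with h; exacts [inv_nonneg.mpr (ww_pos n).le, le_rfl])
    hG10 hshelllo.1 hsum1
  have hidlo : ∀ n : ℤ × ℤ,
      Real.sqrt (if ww n ≤ lam ^ 2 then (ww n)⁻¹ else 0) * Real.sqrt (ww n * ‖c n‖ ^ 2)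
        = (if ww n ≤ lam ^ 2 then ‖c n‖ else 0) := by
    intro n
    by_cases hn : ww n ≤ lam ^ 2
    · rw [if_pos hn, if_pos hn, ← Real.sqrt_mul (inv_nonneg.mpr (ww_pos n).le),
        inv_mul_cancel_left₀ (ne_of_gt (ww_pos n)), Real.sqrt_sq (norm_nonneg _)]
    · rw [if_neg hn, if_neg hn, Real.sqrt_zero, zero_mul]
  -- Cauchy-Schwarz: high part
  have hcshi := cs (fun n => if ww n ≤ lam ^ 2 then 0 else ww n ^ (-s))
    (fun n => ww n ^ s * ‖c n‖ ^ 2)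
    (fun n => by split_ifs with h; exacts [le_rfl, Real.rpow_nonneg (ww_pos n).le _])
    hG0 hshellhi.1 hsumS
  have hidhi : ∀ n : ℤ × ℤ,
      Real.sqrt (if ww n ≤ lam ^ 2 then 0 else ww n ^ (-s))
          * Real.sqrt (ww n ^ s * ‖c n‖ ^ 2)
        = (if ww n ≤ lam ^ 2 then 0 else ‖c n‖) := by
    intro n
    by_cases hn : ww n ≤ lam ^ 2
    · rw [if_pos hn, if_pos hn, Real.sqrt_zero, zero_mul]
    · rw [if_neg hn, if_neg hn]
      exact hid1 n
  have hsumflo : Summable (fun n : ℤ × ℤ => if ww n ≤ lam ^ 2 then ‖c n‖ else 0) :=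
    hcslo.1.congr hidlo
  have hsumfhi : Summable (fun n : ℤ × ℤ => if ww n ≤ lam ^ 2 then 0 else ‖c n‖) :=
    hcshi.1.congr hidhi
  have hts : ∑' n : ℤ × ℤ, ‖c n‖
      = (∑' n : ℤ × ℤ, if ww n ≤ lam ^ 2 then ‖c n‖ else 0)
        + (∑' n : ℤ × ℤ, if ww n ≤ lam ^ 2 then 0 else ‖c n‖) := by
    rw [← Summable.tsum_add hsumflo hsumfhi]
    exact tsum_congr (fun n => by by_cases h : ww n ≤ lam ^ 2 <;> simp [h])
  -- the norm of a Fourier mode is 1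
  have hnorm1 : ∀ n : ℤ × ℤ, ‖c n * fourierMode2 n x‖ = ‖c n‖ := by
    intro n
    rw [norm_mul]
    have him : (Complex.I * ((n.1 : ℂ) * (x.1 : ℂ) + (n.2 : ℂ) * (x.2 : ℂ))).re = 0 := by
      simp
    have : ‖fourierMode2 n x‖ = 1 := by
      rw [fourierMode2, Complex.norm_exp, him, Real.exp_zero]
    rw [this, mul_one]
  have hnormle : ‖∑' n : ℤ × ℤ, c n * fourierMode2 n x‖ ≤ ∑' n : ℤ × ℤ, ‖c n‖ := by
    have hsummode : Summable (fun n : ℤ × ℤ => ‖c n * fourierMode2 n x‖) :=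
      hsumnorm.congr (fun n => (hnorm1 n).symm)
    calc ‖∑' n : ℤ × ℤ, c n * fourierMode2 n x‖
        ≤ ∑' n : ℤ × ℤ, ‖c n * fourierMode2 n x‖ := norm_tsum_le_tsum_norm hsummode
      _ = ∑' n : ℤ × ℤ, ‖c n‖ := tsum_congr hnorm1
  -- bound on the low part
  have hsqrtL1 : 1 ≤ Real.sqrt L := by
    rw [show (1:ℝ) = Real.sqrt 1 from (Real.sqrt_one).symm]
    exact Real.sqrt_le_sqrt hL1
  have hlowbound : (∑' n : ℤ × ℤ, if ww n ≤ lam ^ 2 then ‖c n‖ else 0)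
      ≤ (D1 * Real.sqrt L) * Real.sqrt A := by
    have h1 : (∑' n : ℤ × ℤ, if ww n ≤ lam ^ 2 then ‖c n‖ else 0)
        = ∑' n : ℤ × ℤ, Real.sqrt (if ww n ≤ lam ^ 2 then (ww n)⁻¹ else 0)
            * Real.sqrt (ww n * ‖c n‖ ^ 2) := tsum_congr (fun n => (hidlo n).symm)
    have hsq : Real.sqrt (∑' n : ℤ × ℤ, if ww n ≤ lam ^ 2 then (ww n)⁻¹ else 0)
        ≤ D1 * Real.sqrt L := by
      calc Real.sqrt (∑' n : ℤ × ℤ, if ww n ≤ lam ^ 2 then (ww n)⁻¹ else 0)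
          ≤ Real.sqrt (9 + 8 * Real.log lam) := Real.sqrt_le_sqrt hshelllo.2
        _ ≤ Real.sqrt ((9 + 8 / (s - 1)) * L) := by
            apply Real.sqrt_le_sqrt
            rw [hloglam]
            have hiden : (9 + 8 / (s - 1)) * L - (9 + 8 * (1 / (s - 1) * L)) = 9 * (L - 1) := by
              ring
            linarith
        _ = D1 * Real.sqrt L := by
            rw [Real.sqrt_mul (by positivity), hD1]
    rw [h1, ← hAdef] at *
    calc ∑' n : ℤ × ℤ, Real.sqrt (if ww n ≤ lam ^ 2 then (ww n)⁻¹ else 0)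
          * Real.sqrt (ww n * ‖c n‖ ^ 2)
        ≤ Real.sqrt (∑' n : ℤ × ℤ, if ww n ≤ lam ^ 2 then (ww n)⁻¹ else 0)
            * Real.sqrt A := hcslo.2
      _ ≤ (D1 * Real.sqrt L) * Real.sqrt A :=
          mul_le_mul_of_nonneg_right hsq (Real.sqrt_nonneg _)
  -- bound on the high part
  have hhibound : (∑' n : ℤ × ℤ, if ww n ≤ lam ^ 2 then 0 else ‖c n‖) ≤ D2 := by
    have h1 : (∑' n : ℤ × ℤ, if ww n ≤ lam ^ 2 then 0 else ‖c n‖)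
        = ∑' n : ℤ × ℤ, Real.sqrt (if ww n ≤ lam ^ 2 then 0 else ww n ^ (-s))
            * Real.sqrt (ww n ^ s * ‖c n‖ ^ 2) := tsum_congr (fun n => (hidhi n).symm)
    have h4 : Real.sqrt (Ks * lam ^ (2 - 2 * s)) = D2 * lam ^ (1 - s) := by
      rw [Real.sqrt_mul hKs0.le, hD2]
      congr 1
      rw [Real.sqrt_eq_rpow, ← Real.rpow_mul hlampos.le,
        show (2 - 2 * s) * (1 / 2 : ℝ) = 1 - s by ring]
    have hlamval : lam ^ (1 - s) = E⁻¹ := by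
      rw [hlamdef, ← Real.rpow_mul hEpos.le,
        show (1 / (s - 1)) * (1 - s) = -1 by field_simp; ring, Real.rpow_neg_one]
    have h5 : lam ^ (1 - s) * Real.sqrt Bs ≤ 1 := by
      rw [hlamval]
      have hsb : Real.sqrt Bs ≤ E := by rw [hEdef]; linarith [Real.exp_pos 1]
      calc E⁻¹ * Real.sqrt Bs ≤ E⁻¹ * E :=
            mul_le_mul_of_nonneg_left hsb (inv_nonneg.mpr hEpos.le)
        _ = 1 := inv_mul_cancel₀ (ne_of_gt hEpos)
    rw [h1, ← hBdef] at *
    calc ∑' n : ℤ × ℤ, Real.sqrt (if ww n ≤ lam ^ 2 then 0 else ww n ^ (-s))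
          * Real.sqrt (ww n ^ s * ‖c n‖ ^ 2)
        ≤ Real.sqrt (∑' n : ℤ × ℤ, if ww n ≤ lam ^ 2 then 0 else ww n ^ (-s))
            * Real.sqrt Bs := hcshi.2
      _ ≤ Real.sqrt (Ks * lam ^ (2 - 2 * s)) * Real.sqrt Bs :=
          mul_le_mul_of_nonneg_right (Real.sqrt_le_sqrt hshellhi.2) (Real.sqrt_nonneg _)
      _ = D2 * (lam ^ (1 - s) * Real.sqrt Bs) := by rw [h4]; ring
      _ ≤ D2 * 1 := mul_le_mul_of_nonneg_left h5 hD2pos.le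
      _ = D2 := mul_one _
  -- assemble
  have hfinal : ∑' n : ℤ × ℤ, ‖c n‖ ≤ (D1 + D2) * (1 + Real.sqrt A) * Real.sqrt L := by
    rw [hts]
    have t1 : 0 ≤ D1 * Real.sqrt L := mul_nonneg hD1pos.le (Real.sqrt_nonneg _)
    have t2 : 0 ≤ D2 * (Real.sqrt L - 1) := mul_nonneg hD2pos.le (by linarith)
    have t3 : 0 ≤ D2 * Real.sqrt A * Real.sqrt L :=
      mul_nonneg (mul_nonneg hD2pos.le (Real.sqrt_nonneg _)) (Real.sqrt_nonneg _)
    have hsa : 0 ≤ Real.sqrt A := Real.sqrt_nonneg A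
    nlinarith [hlowbound, hhibound]
  rw [← Real.sqrt_eq_rpow, ← Real.sqrt_eq_rpow, ← hEdef, ← hLdef]
  exact le_trans hnormle hfinal
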